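/- Let g ≥ 1, let μ = (μ_1 ≥ … ≥ μ_g ≥ 0) be a partition with at most g parts, and fix k with 1 ≤ k ≤ g. Then in ℤ[t_1, …, t_g] one has det(t_j^{μ_i+g−i})_{1≤i,j≤g} = (∏_{1≤i<j≤g}(t_i − t_j)) · det(M), where M is the g×g matrix whose (i,j) entry is h_{μ_i+j−i}^{⟨1,g⟩} (complete homogeneous in all variables t_1,…,t_g) if j ≤ k, and is h_{μ_i+j−i}^{⟨k+1,g⟩} (complete homogeneous in t_{k+1},…,t_g only) if j > k. -/

import Mathlib

/-- `hpoly R a b n` is the complete homogeneous symmetric polynomial of degree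
`n` in the variables `t_a, …, t_b` (the sum of all monomials of total degree
`n` in these variables), with `hpoly R a b n = 0` for `n < 0`. -/
noncomputable def hpoly (R : Type*) [CommRing R] (a b : ℕ) (n : ℤ) :
    MvPolynomial ℕ R :=
  if 0 ≤ n then
    ∑ d ∈ (Finset.Icc a b).sym n.toNat, (Multiset.map MvPolynomial.X d.1).prod
  else 0


open Finset MvPolynomial

noncomputable def epoly (S : Finset ℕ) (r : ℕ) : MvPolynomial ℕ ℤ :=
  ∑ T ∈ S.powersetCard r, ∏ i ∈ T, X i

noncomputable def hp (S : Finset ℕ) (n : ℤ) : MvPolynomial ℕ ℤ :=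
  if 0 ≤ n then ∑ d ∈ S.sym n.toNat, (Multiset.map X d.1).prod else 0

lemma hp_neg (S : Finset ℕ) {n : ℤ} (h : n < 0) : hp S n = 0 := if_neg (by omega)

lemma hp_zero (S : Finset ℕ) : hp S 0 = 1 := by
  rw [hp, if_pos le_rfl]
  rw [show Int.toNat 0 = 0 from rfl, Finset.sym_zero, Finset.sum_singleton]
  rfl

lemma epoly_zero (S : Finset ℕ) : epoly S 0 = 1 := by
  simp [epoly]

lemma epoly_eq_zero (S : Finset ℕ) {r : ℕ} (h : S.card < r) : epoly S r = 0 := by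
  rw [epoly, Finset.powersetCard_eq_empty.2 h, Finset.sum_empty]

lemma epoly_insert {S : Finset ℕ} {a : ℕ} (ha : a ∉ S) (r : ℕ) :
    epoly (insert a S) (r + 1) = epoly S (r + 1) + X a * epoly S r := by
  rw [epoly, Finset.powersetCard_succ_insert ha, Finset.sum_union]
  · congr 1
    rw [Finset.sum_image (fun T hT T' hT' hEq => by
      have haT : a ∉ T := fun h => ha ((Finset.mem_powersetCard.1 hT).1 h)
      have haT' : a ∉ T' := fun h => ha ((Finset.mem_powersetCard.1 hT').1 h)
      rw [← Finset.erase_insert haT, hEq, Finset.erase_insert haT'])]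
    rw [epoly, Finset.mul_sum]
    refine Finset.sum_congr rfl fun T hT => ?_
    rw [Finset.prod_insert (fun h => ha ((Finset.mem_powersetCard.1 hT).1 h))]
  · rw [Finset.disjoint_left]
    intro T hT hT'
    obtain ⟨T', hT', rfl⟩ := Finset.mem_image.1 hT'
    exact ha ((Finset.mem_powersetCard.1 hT).1 (Finset.mem_insert_self a T'))

lemma hp_erase {U : Finset ℕ} {a : ℕ} (ha : a ∈ U) (n : ℤ) :
    hp (U.erase a) n = hp U n - X a * hp U (n - 1) := by
  rcases lt_or_ge n 0 with h | h
  · rw [hp_neg _ h, hp_neg _ h, hp_neg _ (by omega), mul_zero, sub_zero]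
  rcases eq_or_lt_of_le h with h0 | h1
  · rw [← h0, hp_zero, hp_zero, hp_neg _ (by norm_num), mul_zero, sub_zero]
  obtain ⟨m, rfl⟩ : ∃ m : ℕ, n = (m : ℤ) + 1 := ⟨(n - 1).toNat, by omega⟩
  rw [eq_sub_iff_add_eq]
  rw [hp, hp, hp, if_pos h, if_pos (by omega : (0:ℤ) ≤ (m:ℤ) + 1 - 1), if_pos (by positivity)]
  rw [show ((m:ℤ) + 1).toNat = m + 1 by omega, show ((m:ℤ) + 1 - 1).toNat = m by omega]
  have claim1 : (U.sym (m+1)).filter (fun d => ¬ a ∈ d) = (U.erase a).sym (m+1) := by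
    ext d
    simp only [Finset.mem_filter, Finset.mem_sym_iff, Finset.mem_erase]
    constructor
    · rintro ⟨h1, h2⟩ x hx; exact ⟨fun he => h2 (he ▸ hx), h1 x hx⟩
    · intro h; exact ⟨fun x hx => (h x hx).2, fun hd => (h a hd).1 rfl⟩
  have claim2 : (U.sym (m+1)).filter (fun d => a ∈ d) = (U.sym m).image (fun d => a ::ₛ d) := by
    ext d
    simp only [Finset.mem_filter, Finset.mem_sym_iff, Finset.mem_image]
    constructor
    · rintro ⟨h1, h2⟩
      refine ⟨d.erase a h2, fun x hx => h1 x ?_, Sym.cons_erase h2⟩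
      have : x ∈ (d.erase a h2 : Multiset ℕ) := hx
      rw [Sym.coe_erase] at this
      exact Multiset.mem_of_mem_erase this
    · rintro ⟨d', hd', rfl⟩
      refine ⟨fun x hx => ?_, Sym.mem_cons_self a d'⟩
      rcases Sym.mem_cons.1 hx with rfl | hx
      · exact ha
      · exact hd' x hx
  calc ∑ d ∈ (U.erase a).sym (m+1), (Multiset.map X d.1).prod
        + X a * ∑ d ∈ U.sym m, (Multiset.map X d.1).prod
      = ∑ d ∈ (U.sym (m+1)).filter (fun d => ¬ a ∈ d), (Multiset.map X d.1).prod
        + ∑ d ∈ (U.sym (m+1)).filter (fun d => a ∈ d), (Multiset.map X d.1).prod := by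
        rw [claim1, claim2, Finset.sum_image (fun x _ y _ h => (Sym.cons_inj_right a x y).1 h),
          Finset.mul_sum]
        congr 1
        refine Finset.sum_congr rfl fun d _ => ?_
        have : ((a ::ₛ d : Sym ℕ (m+1)) : Multiset ℕ) = a ::ₘ (d : Multiset ℕ) := Sym.coe_cons d a
        rw [show (a ::ₛ d : Sym ℕ (m+1)).1 = a ::ₘ (d : Multiset ℕ) from this,
          Multiset.map_cons, Multiset.prod_cons]
        rfl
    _ = ∑ d ∈ U.sym (m+1), (Multiset.map X d.1).prod := by
        rw [add_comm, Finset.sum_filter_add_sum_filter_not]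

lemma hp_singleton (a m : ℕ) : hp {a} (m : ℤ) = X a ^ m := by
  rw [hp, if_pos (by positivity), Int.toNat_natCast, Finset.sym_singleton,
    Finset.sum_singleton, show (Sym.replicate m a).1 = Multiset.replicate m a from rfl,
    Multiset.map_replicate, Multiset.prod_replicate]

lemma master0 (T S : Finset ℕ) : ∀ n : ℤ, S ⊆ T →
    ∑ r ∈ Finset.range (S.card + 1),
        (-1 : MvPolynomial ℕ ℤ) ^ r * epoly S r * hp T (n - r)
      = hp (T \ S) n := by
  induction S using Finset.induction_on with
  | empty => intro n _; simp [epoly_zero]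
  | @insert a S₀ ha ih =>
    intro n hST
    have haT : a ∈ T := hST (mem_insert_self a S₀)
    have haS : a ∈ T \ S₀ := Finset.mem_sdiff.2 ⟨haT, ha⟩
    have hS₀T : S₀ ⊆ T := (Finset.subset_insert a S₀).trans hST
    have hsd : (T \ S₀).erase a = T \ insert a S₀ := by
      ext x
      simp only [Finset.mem_erase, Finset.mem_sdiff, Finset.mem_insert]
      tauto
    rw [Finset.card_insert_of_notMem ha, Finset.sum_range_succ']
    have e1 : ∑ i ∈ Finset.range (S₀.card + 1),
        (-1:MvPolynomial ℕ ℤ)^(i+1) * epoly (insert a S₀) (i+1) * hp T (n - ↑(i+1))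
      = (∑ i ∈ Finset.range (S₀.card + 1),
          (-1:MvPolynomial ℕ ℤ)^(i+1) * epoly S₀ (i+1) * hp T (n - ↑(i+1)))
        - X a * ∑ i ∈ Finset.range (S₀.card + 1),
            (-1:MvPolynomial ℕ ℤ)^i * epoly S₀ i * hp T ((n-1) - i) := by
      rw [Finset.mul_sum, ← Finset.sum_sub_distrib]
      refine Finset.sum_congr rfl fun i _ => ?_
      rw [epoly_insert ha, show (n : ℤ) - ↑(i+1) = (n-1) - i by push_cast; ring]
      ring
    rw [e1]
    have e2 : (∑ i ∈ Finset.range (S₀.card + 1),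
          (-1:MvPolynomial ℕ ℤ)^(i+1) * epoly S₀ (i+1) * hp T (n - ↑(i+1)))
        + (-1:MvPolynomial ℕ ℤ)^(0:ℕ) * epoly (insert a S₀) 0 * hp T (n - ((0:ℕ):ℤ))
      = hp (T \ S₀) n := by
      have hins0 : epoly (insert a S₀) 0 = epoly S₀ 0 := by rw [epoly_zero, epoly_zero]
      rw [hins0,
        ← Finset.sum_range_succ'
          (fun r => (-1:MvPolynomial ℕ ℤ)^r * epoly S₀ r * hp T (n - r)) (S₀.card + 1),
        Finset.sum_range_succ, epoly_eq_zero S₀ (by omega), mul_zero, zero_mul, add_zero,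
        ih n hS₀T]
    rw [ih (n-1) hS₀T, ← hsd, hp_erase haS n]
    linear_combination e2

lemma master {S T : Finset ℕ} (hST : S ⊆ T) (n : ℤ) (B : ℕ)
    (hB : S.card < B ∨ n < B) :
    ∑ r ∈ Finset.range B, (-1 : MvPolynomial ℕ ℤ) ^ r * epoly S r * hp T (n - r)
      = hp (T \ S) n := by
  set F : ℕ → MvPolynomial ℕ ℤ := fun r => (-1) ^ r * epoly S r * hp T (n - r) with hF
  have h1 : ∑ r ∈ Finset.range (max B (S.card + 1)), F r = ∑ r ∈ Finset.range B, F r := by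
    refine (Finset.sum_subset (Finset.range_subset_range.2 (le_max_left _ _)) fun r _ hr => ?_).symm
    have hrB : B ≤ r := by simpa using hr
    show (-1 : MvPolynomial ℕ ℤ) ^ r * epoly S r * hp T (n - ↑r) = 0
    rcases hB with hB | hB
    · rw [epoly_eq_zero S (by omega), mul_zero, zero_mul]
    · rw [hp_neg T (by omega : (n : ℤ) - r < 0), mul_zero]
  have h2 : ∑ r ∈ Finset.range (max B (S.card + 1)), F r
      = ∑ r ∈ Finset.range (S.card + 1), F r := by
    refine (Finset.sum_subset (Finset.range_subset_range.2 (le_max_right _ _)) fun r _ hr => ?_).symm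
    have hrB : S.card + 1 ≤ r := by simpa using hr
    show (-1 : MvPolynomial ℕ ℤ) ^ r * epoly S r * hp T (n - ↑r) = 0
    rw [epoly_eq_zero S (by omega), mul_zero, zero_mul]
  rw [← h1, h2, master0 T S n hST]

lemma entry (g : ℕ) (lam : ℕ) (j : Fin g) :
    ∑ c : Fin g, hp (Finset.Icc 1 g) ((lam : ℤ) - (g - 1 - c.val : ℕ)) *
      ((-1) ^ (g - 1 - c.val) * epoly ((Finset.Icc 1 g).erase (j.val + 1)) (g - 1 - c.val))
    = X (j.val + 1) ^ lam := by
  have hjm : j.val + 1 ∈ Finset.Icc 1 g := by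
    simp only [Finset.mem_Icc]; omega
  rw [Fin.sum_univ_eq_sum_range (fun c => hp (Finset.Icc 1 g) ((lam : ℤ) - (g - 1 - c : ℕ)) *
      ((-1) ^ (g - 1 - c) * epoly ((Finset.Icc 1 g).erase (j.val + 1)) (g - 1 - c))) g,
    Finset.sum_range_reflect (fun r => hp (Finset.Icc 1 g) ((lam : ℤ) - (r : ℕ)) *
      ((-1) ^ r * epoly ((Finset.Icc 1 g).erase (j.val + 1)) r)) g]
  have hcard : ((Finset.Icc 1 g).erase (j.val + 1)).card = g - 1 := by
    rw [Finset.card_erase_of_mem hjm, Nat.card_Icc]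
    omega
  have hg : 0 < g := j.pos
  have := master (Finset.erase_subset (j.val+1) (Finset.Icc 1 g)) (lam : ℤ) g
    (Or.inl (by rw [hcard]; omega))
    
  rw [Finset.sdiff_erase_self hjm, hp_singleton] at this
  rw [← this]
  exact Finset.sum_congr rfl fun r _ => by ring

lemma detA0 (g : ℕ) :
    Matrix.det (Matrix.of fun i j : Fin g =>
        (X (j.val + 1) : MvPolynomial ℕ ℤ) ^ (g - 1 - i.val))
      = ∏ j ∈ Finset.Icc 1 g, ∏ i ∈ Finset.Ico 1 j,
          (X i - X j : MvPolynomial ℕ ℤ) := by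
  rw [← Matrix.det_submatrix_equiv_self Fin.revPerm
    (Matrix.of fun i j : Fin g => (X (j.val + 1) : MvPolynomial ℕ ℤ) ^ (g - 1 - i.val))]
  have h1 : (Matrix.of fun i j : Fin g =>
        (X (j.val + 1) : MvPolynomial ℕ ℤ) ^ (g - 1 - i.val)).submatrix
          Fin.revPerm Fin.revPerm
      = (Matrix.vandermonde (fun i : Fin g =>
          (X (g - i.val) : MvPolynomial ℕ ℤ))).transpose := by
    ext i j
    simp only [Matrix.submatrix_apply, Matrix.of_apply, Matrix.transpose_apply,
      Matrix.vandermonde_apply, Fin.revPerm_apply, Fin.val_rev]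
    have hi := i.isLt
    have hj := j.isLt
    rw [show g - (j.val + 1) + 1 = g - j.val by omega,
      show g - 1 - (g - (i.val + 1)) = i.val by omega]
  rw [h1, Matrix.det_transpose, Matrix.det_vandermonde]
  rw [Finset.prod_sigma', Finset.prod_sigma']
  refine Finset.prod_bij'
    (fun p _ => (⟨g - p.1.val, g - p.2.val⟩ : Σ _ : ℕ, ℕ))
    (fun q hq => (⟨⟨g - q.1, by
        have := (Finset.mem_sigma.1 hq).1
        simp only [Finset.mem_Icc] at this; omega⟩,
      ⟨g - q.2, by
        have h1 := (Finset.mem_sigma.1 hq).1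
        have h2 := (Finset.mem_sigma.1 hq).2
        simp only [Finset.mem_Icc] at h1
        simp only [Finset.mem_Ico] at h2; omega⟩⟩ : Σ _ : Fin g, Fin g))
    ?_ ?_ ?_ ?_ ?_
  · intro p hp
    have h2 := (Finset.mem_sigma.1 hp).2
    rw [Finset.mem_Ioi] at h2
    have hlt : p.1.val < p.2.val := h2
    have := p.2.isLt
    simp only [Finset.mem_sigma, Finset.mem_Icc, Finset.mem_Ico]
    omega
  · intro q hq
    have h1 := (Finset.mem_sigma.1 hq).1
    have h2 := (Finset.mem_sigma.1 hq).2
    simp only [Finset.mem_Icc] at h1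
    simp only [Finset.mem_Ico] at h2
    simp only [Finset.mem_sigma, Finset.mem_univ, Finset.mem_Ioi, true_and]
    rw [Fin.lt_def]
    show g - q.1 < g - q.2
    omega
  · intro p hp
    have h2 := (Finset.mem_sigma.1 hp).2
    rw [Finset.mem_Ioi] at h2
    rcases p with ⟨a, b⟩
    have hlt : a.val < b.val := h2
    have hb := b.isLt
    refine Sigma.ext ?_ ?_
    · exact Fin.ext (show g - (g - a.val) = a.val by omega)
    · exact heq_of_eq (Fin.ext (show g - (g - b.val) = b.val by omega))
  · intro q hq
    have h1 := (Finset.mem_sigma.1 hq).1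
    have h2 := (Finset.mem_sigma.1 hq).2
    simp only [Finset.mem_Icc] at h1
    simp only [Finset.mem_Ico] at h2
    rcases q with ⟨a, b⟩
    dsimp only at h1 h2
    refine Sigma.ext ?_ ?_
    · show g - (g - a) = a; omega
    · exact heq_of_eq (show g - (g - b) = b by omega)
  · intro p hp
    rfl

noncomputable def Bmat (g : ℕ) : Matrix (Fin g) (Fin g) (MvPolynomial ℕ ℤ) :=
  Matrix.of fun c j : Fin g =>
    (-1) ^ (g - 1 - c.val) * epoly ((Finset.Icc 1 g).erase (j.val + 1)) (g - 1 - c.val)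

lemma factorA (g : ℕ) (lam : Fin g → ℕ) :
    Matrix.det (Matrix.of fun i j : Fin g =>
        (X (j.val + 1) : MvPolynomial ℕ ℤ) ^ lam i)
      = Matrix.det (Matrix.of fun i c : Fin g =>
          hp (Finset.Icc 1 g) ((lam i : ℤ) - (g - 1 - c.val : ℕ)))
        * Matrix.det (Bmat g) := by
  rw [← Matrix.det_mul]
  congr 1
  refine Matrix.ext fun i j => ?_
  rw [Matrix.mul_apply]
  exact (entry g (lam i) j).symm

lemma detH0 (g : ℕ) :
    Matrix.det (Matrix.of fun i c : Fin g =>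
      hp (Finset.Icc 1 g) (((g - 1 - i.val : ℕ) : ℤ) - ((g - 1 - c.val : ℕ) : ℤ))) = 1 := by
  rw [Matrix.det_of_upperTriangular]
  · refine Finset.prod_eq_one fun i _ => ?_
    rw [Matrix.of_apply, sub_self, hp_zero]
  · intro i c hlt
    have hi := i.isLt
    have hc := c.isLt
    have h : (c : ℕ) < (i : ℕ) := hlt
    exact hp_neg _ (by omega)

lemma detBval (g : ℕ) :
    Matrix.det (Bmat g)
      = ∏ j ∈ Finset.Icc 1 g, ∏ i ∈ Finset.Ico 1 j,
          (X i - X j : MvPolynomial ℕ ℤ) := by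
  have := factorA g (fun i => g - 1 - i.val)
  rw [detH0, one_mul] at this
  rw [← this, detA0]

lemma hpoly_eq (a b : ℕ) : hpoly ℤ a b = hp (Finset.Icc a b) := rfl

noncomputable def Cmat (g k : ℕ) : Matrix (Fin g) (Fin g) (MvPolynomial ℕ ℤ) :=
  Matrix.of fun c j : Fin g =>
    if j.val + 1 ≤ k then (if c = j then 1 else 0)
    else (if c.val ≤ j.val then
        (-1) ^ (j.val - c.val) * epoly (Finset.Icc 1 k) (j.val - c.val)
      else 0)

lemma detC (g k : ℕ) : Matrix.det (Cmat g k) = 1 := by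
  rw [Matrix.det_of_upperTriangular]
  · refine Finset.prod_eq_one fun c _ => ?_
    by_cases h : c.val + 1 ≤ k
    · simp [Cmat, h, epoly_zero]
    · simp [Cmat, h, epoly_zero]
  · intro c j hlt
    have h : (j : ℕ) < (c : ℕ) := hlt
    by_cases hj : j.val + 1 ≤ k
    · have hne : c ≠ j := Fin.ne_of_val_ne (by omega)
      rw [Cmat, Matrix.of_apply, if_pos hj, if_neg hne]
    · have hne : ¬ c.val ≤ j.val := by omega
      rw [Cmat, Matrix.of_apply, if_neg hj, if_neg hne]

lemma entryC (g k : ℕ) (hkg : k ≤ g) (a : ℕ) (b : ℤ) (j : Fin g)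
    (hj : ¬ (j.val + 1 ≤ k)) :
    ∑ c : Fin g, hp (Finset.Icc 1 g) ((a : ℤ) + (c.val + 1) - b) * Cmat g k c j
      = hp (Finset.Icc (k + 1) g) ((a : ℤ) + (j.val + 1) - b) := by
  have hjg := j.isLt
  have step1 : ∀ c : Fin g,
      hp (Finset.Icc 1 g) ((a : ℤ) + (c.val + 1) - b) * Cmat g k c j
      = hp (Finset.Icc 1 g) ((a : ℤ) + (c.val + 1) - b) *
          (if c.val ≤ j.val then
            (-1) ^ (j.val - c.val) * epoly (Finset.Icc 1 k) (j.val - c.val) else 0) := by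
    intro c
    rw [Cmat, Matrix.of_apply, if_neg hj]
  rw [Finset.sum_congr rfl fun c _ => step1 c]
  rw [Fin.sum_univ_eq_sum_range (fun c => hp (Finset.Icc 1 g) ((a : ℤ) + (c + 1) - b) *
    (if c ≤ j.val then (-1) ^ (j.val - c) * epoly (Finset.Icc 1 k) (j.val - c) else 0)) g]
  rw [← Finset.sum_subset (Finset.range_subset_range.2 (by omega : j.val + 1 ≤ g))
    (fun c _ hc => by
      rw [if_neg (by simp only [Finset.mem_range] at hc ⊢; omega), mul_zero])]
  have step2 : ∀ c ∈ Finset.range (j.val + 1),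
      hp (Finset.Icc 1 g) ((a : ℤ) + (c + 1) - b) *
        (if c ≤ j.val then (-1) ^ (j.val - c) * epoly (Finset.Icc 1 k) (j.val - c) else 0)
      = (fun r => hp (Finset.Icc 1 g) ((a : ℤ) + (↑(j.val - r) + 1) - b) *
          ((-1) ^ r * epoly (Finset.Icc 1 k) r)) (j.val + 1 - 1 - c) := by
    intro c hc
    rw [Finset.mem_range] at hc
    simp only
    rw [if_pos (by omega), show j.val + 1 - 1 - c = j.val - c by omega,
      show j.val - (j.val - c) = c by omega]
  rw [Finset.sum_congr rfl step2,
    Finset.sum_range_reflect (fun r => hp (Finset.Icc 1 g) ((a : ℤ) + (↑(j.val - r) + 1) - b) *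
      ((-1) ^ r * epoly (Finset.Icc 1 k) r)) (j.val + 1)]
  have step3 : ∀ r ∈ Finset.range (j.val + 1),
      hp (Finset.Icc 1 g) ((a : ℤ) + (↑(j.val - r) + 1) - b) *
        ((-1) ^ r * epoly (Finset.Icc 1 k) r)
      = (-1) ^ r * epoly (Finset.Icc 1 k) r *
          hp (Finset.Icc 1 g) (((a : ℤ) + (j.val + 1) - b) - r) := by
    intro r hr
    rw [Finset.mem_range] at hr
    rw [show ((a : ℤ) + (↑(j.val - r) + 1) - b) = ((a : ℤ) + (j.val + 1) - b) - r by
      push_cast [Nat.cast_sub (by omega : r ≤ j.val)]; ring]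
    ring
  rw [Finset.sum_congr rfl step3]
  have hsub : Finset.Icc 1 k ⊆ Finset.Icc 1 g := Finset.Icc_subset_Icc_right hkg
  have hdiff : Finset.Icc 1 g \ Finset.Icc 1 k = Finset.Icc (k + 1) g := by
    ext x
    simp only [Finset.mem_sdiff, Finset.mem_Icc]
    omega
  rw [master hsub ((a : ℤ) + (j.val + 1) - b) (j.val + 1)
    (Or.inl (by rw [Nat.card_Icc]; omega)), hdiff]

lemma factorM (g k : ℕ) (hkg : k ≤ g) (μ : ℕ → ℕ) :
    Matrix.det (Matrix.of fun i j : Fin g =>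
      if j.val + 1 ≤ k then
        hpoly ℤ 1 g ((μ (i.val + 1) : ℤ) + (j.val + 1) - (i.val + 1))
      else
        hpoly ℤ (k + 1) g ((μ (i.val + 1) : ℤ) + (j.val + 1) - (i.val + 1)))
    = Matrix.det (Matrix.of fun i c : Fin g =>
        hp (Finset.Icc 1 g) ((μ (i.val + 1) : ℤ) + (c.val + 1) - (i.val + 1))) := by
  have key : (Matrix.of fun i j : Fin g =>
      if j.val + 1 ≤ k then
        hpoly ℤ 1 g ((μ (i.val + 1) : ℤ) + (j.val + 1) - (i.val + 1))
      else
        hpoly ℤ (k + 1) g ((μ (i.val + 1) : ℤ) + (j.val + 1) - (i.val + 1)))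
      = (Matrix.of fun i c : Fin g =>
          hp (Finset.Icc 1 g) ((μ (i.val + 1) : ℤ) + (c.val + 1) - (i.val + 1)))
        * Cmat g k := by
    refine Matrix.ext fun i j => ?_
    rw [Matrix.mul_apply]
    simp only [Matrix.of_apply]
    by_cases hj : j.val + 1 ≤ k
    · rw [if_pos hj, hpoly_eq]
      have : ∀ c : Fin g,
          hp (Finset.Icc 1 g) ((μ (i.val + 1) : ℤ) + (c.val + 1) - (i.val + 1)) * Cmat g k c j
          = if c = j then
              hp (Finset.Icc 1 g) ((μ (i.val + 1) : ℤ) + (c.val + 1) - (i.val + 1)) else 0 := by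
        intro c
        rw [Cmat, Matrix.of_apply, if_pos hj]
        by_cases hcj : c = j
        · rw [if_pos hcj, if_pos hcj, mul_one]
        · rw [if_neg hcj, if_neg hcj, mul_zero]
      rw [Finset.sum_congr rfl fun c _ => this c, Finset.sum_ite_eq' Finset.univ j]
      rw [if_pos (Finset.mem_univ j)]
    · rw [if_neg hj, hpoly_eq]
      exact (entryC g k hkg (μ (i.val + 1)) ((i.val : ℤ) + 1) j hj).symm
  rw [key, Matrix.det_mul, detC, mul_one]

/-- Modified (split) Jacobi–Trudi identity: for a partition `μ` with at most
`g` parts and `1 ≤ k ≤ g`,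
`det(t_j^{μ_i+g-i}) = (∏_{i<j}(t_i - t_j)) · det M` where the `(i,j)` entry of
`M` is `h_{μ_i+j-i}^⟨1,g⟩` (in all variables) for `j ≤ k` and
`h_{μ_i+j-i}^⟨k+1,g⟩` (in `t_{k+1}, …, t_g` only) for `j > k`. -/
theorem split_jacobi_trudi (g : ℕ) (hg : 1 ≤ g) (μ : ℕ → ℕ)
    (hmono : ∀ i j : ℕ, 1 ≤ i → i ≤ j → j ≤ g → μ j ≤ μ i)
    (k : ℕ) (hk1 : 1 ≤ k) (hkg : k ≤ g) :
    Matrix.det (Matrix.of fun i j : Fin g =>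
        (MvPolynomial.X (j.val + 1) : MvPolynomial ℕ ℤ)
          ^ (μ (i.val + 1) + g - (i.val + 1)))
      = (∏ j ∈ Finset.Icc 1 g, ∏ i ∈ Finset.Ico 1 j,
            (MvPolynomial.X i - MvPolynomial.X j)) *
        Matrix.det (Matrix.of fun i j : Fin g =>
          if j.val + 1 ≤ k then
            hpoly ℤ 1 g ((μ (i.val + 1) : ℤ) + (j.val + 1) - (i.val + 1))
          else
            hpoly ℤ (k + 1) g
              ((μ (i.val + 1) : ℤ) + (j.val + 1) - (i.val + 1))) := by
  have hfacA := factorA g (fun i : Fin g => μ (i.val + 1) + g - (i.val + 1))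
  have hH : (Matrix.of fun i c : Fin g =>
        hp (Finset.Icc 1 g)
          (((μ (i.val + 1) + g - (i.val + 1) : ℕ) : ℤ) - ((g - 1 - c.val : ℕ) : ℤ)))
      = Matrix.of fun i c : Fin g =>
          hp (Finset.Icc 1 g) ((μ (i.val + 1) : ℤ) + (c.val + 1) - (i.val + 1)) := by
    refine Matrix.ext fun i c => ?_
    simp only [Matrix.of_apply]
    congr 1
    have hi := i.isLt
    have hc := c.isLt
    omega
  rw [hfacA, hH, factorM g k hkg μ, detBval]
  ring
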